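/- In the neutral case σ = 1, the coupling map Φ_H is non-decreasing with respect to the componentwise order on {0,…,ℓ}^m: for all d, e ∈ {0,…,ℓ}^m and all r ∈ ℛ, if d(i) ≤ e(i) for every i, then Φ_H(d,r)(i) ≤ Φ_H(e,r)(i) for every i. -/

import Mathlib

open Finset

noncomputable section

/-- The mutation map `ℳ_H`. -/
def calMH (ℓ κ : ℕ) (p : ℝ) (b : ℕ) (u : Fin ℓ → ℝ) : ℕ :=
  b - (Finset.univ.filter (fun k : Fin ℓ => (k : ℕ) < b ∧ u k < p / (κ : ℝ))).card
    + (Finset.univ.filter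
        (fun k : Fin ℓ => b ≤ (k : ℕ) ∧ 1 - p * (1 - 1 / (κ : ℝ)) < u k)).card

/-- The lumped fitness function `A_H`. -/
def AH (σ : ℝ) (b : ℕ) : ℝ := if b = 0 then σ else 1

lemma calMH_mono (ℓ κ : ℕ) (p : ℝ) (hp1 : p < 1) (u : Fin ℓ → ℝ) :
    Monotone (fun b => calMH ℓ κ p b u) := by
  apply monotone_nat_of_le_succ
  intro b
  have hPQ : ∀ k : Fin ℓ, u k < p / (κ : ℝ) → 1 - p * (1 - 1 / (κ : ℝ)) < u k → False := by
    intro k hpk hqk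
    have h0 : 1 - p * (1 - 1 / (κ : ℝ)) < p / (κ : ℝ) := lt_trans hqk hpk
    have h1 : p / (κ : ℝ) = p * (1 / (κ : ℝ)) := by ring
    nlinarith
  have hAle : ∀ b : ℕ,
      (Finset.univ.filter (fun k : Fin ℓ => (k : ℕ) < b ∧ u k < p / (κ : ℝ))).card ≤ b := by
    intro b
    have h := Finset.card_le_card_of_injOn (fun k : Fin ℓ => (k : ℕ))
      (s := Finset.univ.filter (fun k : Fin ℓ => (k : ℕ) < b ∧ u k < p / (κ : ℝ)))
      (t := Finset.range b)
      (by intro k hk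
          simp only [Finset.mem_coe, Finset.mem_filter] at hk
          simpa using hk.2.1)
      (by intro a _ c _ h
          exact Fin.val_injective h)
    simpa using h
  by_cases hb : b < ℓ
  · set k₀ : Fin ℓ := ⟨b, hb⟩ with hk₀
    by_cases hQ0 : 1 - p * (1 - 1 / (κ : ℝ)) < u k₀
    · -- Q holds at b, so P fails at b
      have hnP : ¬ u k₀ < p / (κ : ℝ) := fun hP0 => hPQ k₀ hP0 hQ0
      have hA : (Finset.univ.filter (fun k : Fin ℓ => (k : ℕ) < b + 1 ∧ u k < p / (κ : ℝ)))
          = (Finset.univ.filter (fun k : Fin ℓ => (k : ℕ) < b ∧ u k < p / (κ : ℝ))) := by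
        apply Finset.filter_congr
        intro k _
        constructor
        · rintro ⟨h1, h2⟩
          refine ⟨?_, h2⟩
          rcases Nat.lt_succ_iff_lt_or_eq.mp h1 with h | h
          · exact h
          · exfalso; apply hnP; have : k = k₀ := Fin.ext h; rwa [← this]
        · rintro ⟨h1, h2⟩; exact ⟨Nat.lt_succ_of_lt h1, h2⟩
      have hB : (Finset.univ.filter (fun k : Fin ℓ => b ≤ (k : ℕ) ∧ 1 - p * (1 - 1 / (κ : ℝ)) < u k))
          = insert k₀ (Finset.univ.filter
              (fun k : Fin ℓ => b + 1 ≤ (k : ℕ) ∧ 1 - p * (1 - 1 / (κ : ℝ)) < u k)) := by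
        ext k
        simp only [Finset.mem_filter, Finset.mem_insert, Finset.mem_univ, true_and]
        constructor
        · rintro ⟨h1, h2⟩
          rcases eq_or_lt_of_le h1 with h | h
          · left; exact Fin.ext h.symm
          · right; exact ⟨h, h2⟩
        · rintro (h | ⟨h1, h2⟩)
          · subst h; exact ⟨le_refl _, hQ0⟩
          · exact ⟨Nat.le_of_succ_le h1, h2⟩
      have hk₀notmem : k₀ ∉ Finset.univ.filter
          (fun k : Fin ℓ => b + 1 ≤ (k : ℕ) ∧ 1 - p * (1 - 1 / (κ : ℝ)) < u k) := by
        simp [hk₀]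
      simp only [calMH, hA, hB, Finset.card_insert_of_notMem hk₀notmem]
      have := hAle b
      omega
    · -- Q fails at b
      have hB : (Finset.univ.filter (fun k : Fin ℓ => b ≤ (k : ℕ) ∧ 1 - p * (1 - 1 / (κ : ℝ)) < u k))
          = (Finset.univ.filter
              (fun k : Fin ℓ => b + 1 ≤ (k : ℕ) ∧ 1 - p * (1 - 1 / (κ : ℝ)) < u k)) := by
        apply Finset.filter_congr
        intro k _
        constructor
        · rintro ⟨h1, h2⟩
          rcases eq_or_lt_of_le h1 with h | h
          · exfalso; apply hQ0; have : k = k₀ := Fin.ext h.symm; rwa [← this]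
          · exact ⟨h, h2⟩
        · rintro ⟨h1, h2⟩; exact ⟨Nat.le_of_succ_le h1, h2⟩
      have hA : (Finset.univ.filter (fun k : Fin ℓ => (k : ℕ) < b + 1 ∧ u k < p / (κ : ℝ))).card
          ≤ (Finset.univ.filter (fun k : Fin ℓ => (k : ℕ) < b ∧ u k < p / (κ : ℝ))).card + 1 := by
        have hsub : (Finset.univ.filter (fun k : Fin ℓ => (k : ℕ) < b + 1 ∧ u k < p / (κ : ℝ)))
            ⊆ insert k₀ (Finset.univ.filter (fun k : Fin ℓ => (k : ℕ) < b ∧ u k < p / (κ : ℝ))) := by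
          intro k hk
          simp only [Finset.mem_filter, Finset.mem_univ, true_and] at hk
          simp only [Finset.mem_insert, Finset.mem_filter, Finset.mem_univ, true_and]
          rcases Nat.lt_succ_iff_lt_or_eq.mp hk.1 with h | h
          · right; exact ⟨h, hk.2⟩
          · left; exact Fin.ext h
        calc _ ≤ (insert k₀ (Finset.univ.filter
                (fun k : Fin ℓ => (k : ℕ) < b ∧ u k < p / (κ : ℝ)))).card :=
              Finset.card_le_card hsub
          _ ≤ _ := Finset.card_insert_le _ _
      simp only [calMH, hB]
      have := hAle b
      omega
  · -- b ≥ ℓ : all k satisfy k < b, none satisfy b ≤ k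
    push_neg at hb
    have hA : ∀ b' : ℕ, ℓ ≤ b' →
        (Finset.univ.filter (fun k : Fin ℓ => (k : ℕ) < b' ∧ u k < p / (κ : ℝ)))
          = (Finset.univ.filter (fun k : Fin ℓ => u k < p / (κ : ℝ))) := by
      intro b' hb'
      apply Finset.filter_congr
      intro k _
      simp only [and_iff_right_iff_imp]
      intro _
      exact lt_of_lt_of_le k.isLt hb'
    have hBempty : ∀ b' : ℕ, ℓ ≤ b' →
        (Finset.univ.filter (fun k : Fin ℓ => b' ≤ (k : ℕ) ∧ 1 - p * (1 - 1 / (κ : ℝ)) < u k)) = ∅ := by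
      intro b' hb'
      apply Finset.filter_false_of_mem
      intro k _
      rintro ⟨h1, _⟩
      exact absurd (lt_of_lt_of_le k.isLt hb') (not_lt.mpr h1)
    have hAle' : (Finset.univ.filter (fun k : Fin ℓ => u k < p / (κ : ℝ))).card ≤ ℓ :=
      le_trans (Finset.card_filter_le _ _) (by simp)
    simp only [calMH, hA b hb, hA (b+1) (Nat.le_succ_of_le hb),
      hBempty b hb, hBempty (b+1) (Nat.le_succ_of_le hb)]
    omega

theorem PhiH_monotone_neutral
    (ℓ m κ : ℕ) (hℓ : 1 ≤ ℓ) (hm : 1 ≤ m) (hκ : 2 ≤ κ)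
    (p : ℝ) (hp : 0 < p ∧ p < 1)
    -- the selection map `𝒮_H` in the neutral case `σ = 1`, characterized by
    -- `Σ_{i' < 𝒮_H(d,s)} A_H(d(i')) ≤ s·Σ_{i'} A_H(d(i')) < Σ_{i' ≤ 𝒮_H(d,s)} A_H(d(i'))`
    (S : (Fin m → ℕ) → ℝ → Fin m)
    (hS : ∀ (d : Fin m → ℕ) (s : ℝ), (∀ i, d i ≤ ℓ) → 0 ≤ s → s < 1 →
      (∑ i' ∈ Finset.univ.filter (fun i' => i' < S d s), AH 1 (d i'))
          ≤ s * ∑ i' : Fin m, AH 1 (d i') ∧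
        s * (∑ i' : Fin m, AH 1 (d i'))
          < ∑ i' ∈ Finset.univ.filter (fun i' => i' ≤ S d s), AH 1 (d i')) :
    -- `Φ_H(d,(s,i,j,u)) = d(j ← ℳ_H(d(𝒮_H(d,s)),u))` is non-decreasing in `d`
    ∀ d e : Fin m → ℕ, (∀ i, d i ≤ ℓ) → (∀ i, e i ≤ ℓ) → (∀ i, d i ≤ e i) →
      ∀ s : ℝ, 0 ≤ s → s < 1 → ∀ _i j : Fin m,
      ∀ u : Fin ℓ → ℝ, (∀ k, 0 ≤ u k ∧ u k ≤ 1) →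
      ∀ i' : Fin m,
        Function.update d j (calMH ℓ κ p (d (S d s)) u) i'
          ≤ Function.update e j (calMH ℓ κ p (e (S e s)) u) i' := by
  intro d e hd he hde s hs0 hs1 _i j u hu i'
  -- AH 1 is constantly 1, so the sums are cardinalities
  have hAH : ∀ b : ℕ, AH 1 b = 1 := by intro b; simp [AH]
  have hsum : ∀ (f : Fin m → ℕ) (j : Fin m),
      (∑ i' ∈ Finset.univ.filter (fun i' => i' < j), AH 1 (f i')) = (j : ℕ) := by
    intro f j
    simp only [hAH]
    rw [Finset.sum_const, nsmul_eq_mul, mul_one]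
    congr 1
    have : Finset.univ.filter (fun i' => i' < j) = Finset.Iio j := by
      ext k; simp
    rw [this, Fin.card_Iio]
  have hsum' : ∀ (f : Fin m → ℕ) (j : Fin m),
      (∑ i' ∈ Finset.univ.filter (fun i' => i' ≤ j), AH 1 (f i')) = (j : ℕ) + 1 := by
    intro f j
    simp only [hAH]
    rw [Finset.sum_const, nsmul_eq_mul, mul_one]
    have : Finset.univ.filter (fun i' => i' ≤ j) = Finset.Iic j := by
      ext k; simp
    rw [this, Fin.card_Iic]
    push_cast
    ring
  have hsumtot : ∀ f : Fin m → ℕ, (∑ i' : Fin m, AH 1 (f i')) = (m : ℝ) := by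
    intro f
    simp [hAH]
  -- S d s = S e s
  have hSd := hS d s hd hs0 hs1
  have hSe := hS e s he hs0 hs1
  rw [hsum, hsum', hsumtot] at hSd hSe
  have hSeq : S d s = S e s := by
    have h1 : ((S d s : ℕ) : ℝ) < (S e s : ℕ) + 1 := lt_of_le_of_lt hSd.1 hSe.2
    have h2 : ((S e s : ℕ) : ℝ) < (S d s : ℕ) + 1 := lt_of_le_of_lt hSe.1 hSd.2
    have h1' : (S d s : ℕ) < (S e s : ℕ) + 1 := by exact_mod_cast h1
    have h2' : (S e s : ℕ) < (S d s : ℕ) + 1 := by exact_mod_cast h2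
    exact Fin.ext (by omega)
  by_cases hij : i' = j
  · subst hij
    simp only [Function.update_self]
    rw [hSeq]
    exact calMH_mono ℓ κ p hp.2 u (hde (S e s))
  · simp only [Function.update_of_ne hij]
    exact hde i'
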